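/- arXiv:2304.12088 — 4 statements merged into one kernel-verified Lean document; each statement's English description precedes it below -/
import Mathlib

section
/- Let (X, d_X, ⊙, 0_X) be an editable space and (M, μ) a measure space. Then the space L¹(M, μ, X) of (equivalence classes up to μ-null sets of) measurable functions f : M → X with ∫_M d_X(0_X, f(p)) dμ(p) < ∞, equipped with pointwise monoid operation and metric d_W(f, g) = ∫_M d_X(f(p), g(p)) dμ(p), satisfies: d_W(0, f ⊙ g) = d_W(0, f) + d_W(0, g), and d_W(f, g) = d_W(h ⊙ f, h ⊙ g) = d_W(f ⊙ h, g ⊙ h); in particular it is an editable space. -/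
/-- An *editable space*: a metric space `(X, d)` together with a monoid structure
`(X, ⊙, 0_X)` such that `d 0 ·` is a monoid homomorphism to `(ℝ, +)` (P3) and
`d` is left- and right-`⊙`-invariant (P4). -/
structure EditablePkg (X : Type*) where
  d : X → X → ℝ
  op : X → X → X
  zero : X
  d_self : ∀ x, d x x = 0
  d_comm : ∀ x y, d x y = d y x
  d_triangle : ∀ x y z, d x z ≤ d x y + d y z
  eq_of_d : ∀ x y, d x y = 0 → x = y
  op_assoc : ∀ x y z, op (op x y) z = op x (op y z)
  zero_op : ∀ x, op zero x = x
  op_zero : ∀ x, op x zero = x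
  d_zero_op : ∀ x y, d zero (op x y) = d zero x + d zero y
  d_op_left : ∀ x y z, d (op z x) (op z y) = d x y
  d_op_right : ∀ x y z, d (op x z) (op y z) = d x y

open MeasureTheory

/-- For an editable space `X` and a measure space `(M, μ)`, the space of
functions `f : M → X` with `∫ d(0, f) dμ < ∞`, with pointwise operation and the
metric `d_W(f,g) = ∫ d(f(p), g(p)) dμ`, satisfies
`d_W(0, f ⊙ g) = d_W(0, f) + d_W(0, g)` and
`d_W(f, g) = d_W(h ⊙ f, h ⊙ g) = d_W(f ⊙ h, g ⊙ h)`; i.e. it is editable. -/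
theorem stmt_4 {X M : Type*} [MeasurableSpace M] (μ : Measure M)
    (E : EditablePkg X) (f g h : M → X)
    (hf : Integrable (fun p => E.d E.zero (f p)) μ)
    (hg : Integrable (fun p => E.d E.zero (g p)) μ) :
    (∫ p, E.d E.zero (E.op (f p) (g p)) ∂μ
        = (∫ p, E.d E.zero (f p) ∂μ) + ∫ p, E.d E.zero (g p) ∂μ) ∧
    (∫ p, E.d (f p) (g p) ∂μ
        = ∫ p, E.d (E.op (h p) (f p)) (E.op (h p) (g p)) ∂μ) ∧
    (∫ p, E.d (f p) (g p) ∂μ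
        = ∫ p, E.d (E.op (f p) (h p)) (E.op (g p) (h p)) ∂μ) := by
  refine ⟨?_, ?_, ?_⟩
  · simp only [E.d_zero_op]
    exact integral_add hf hg
  · simp only [E.d_op_left]
  · simp only [E.d_op_right]
end

section
/- For every directed acyclic graph G = (V, E), there exists a unique graph G^t = (V, E^t) such that (G^t)^T = G^T and no proper subset E' ⊊ E^t satisfies (V, E')^T = G^T; namely E^t = ⋂ { E' ⊆ V × V : (V, E')^T = G^T }. (Uniqueness of the transitive reduction of a finite DAG.) -/
section Aux

variable {V : Type*} [Fintype V] (E : V → V → Prop)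

open Relation

private lemma aux_closure (hacyc : ∀ a : V, ¬ TransGen E a a) :
    TransGen (fun a b => TransGen E a b ∧
      ¬ ∃ c, TransGen E a c ∧ TransGen E c b) = TransGen E := by
  classical
  set T := TransGen E with hT
  set Et : V → V → Prop := fun a b => T a b ∧ ¬ ∃ c, T a c ∧ T c b with hEt
  have hTtrans : Transitive T := fun _ _ _ h1 h2 => h1.trans h2
  have key : ∀ n a b, (Finset.univ.filter (fun c => T a c ∧ T c b)).card = n →
      T a b → TransGen Et a b := by
    intro n
    induction n using Nat.strong_induction_on with
    | _ n ih =>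
      intro a b hcard hab
      by_cases h : ∃ c, T a c ∧ T c b
      · obtain ⟨c, hac, hcb⟩ := h
        have hsub1 : (Finset.univ.filter (fun d => T a d ∧ T d c)) ⊂
            (Finset.univ.filter (fun d => T a d ∧ T d b)) := by
          refine Finset.ssubset_iff_of_subset ?_ |>.2 ⟨c, ?_, ?_⟩
          · intro d hd
            simp only [Finset.mem_filter, Finset.mem_univ, true_and] at hd ⊢
            exact ⟨hd.1, hd.2.trans hcb⟩
          · simp only [Finset.mem_filter, Finset.mem_univ, true_and]
            exact ⟨hac, hcb⟩
          · simp only [Finset.mem_filter, Finset.mem_univ, true_and, not_and]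
            intro _ hcc
            exact hacyc c hcc
        have hsub2 : (Finset.univ.filter (fun d => T c d ∧ T d b)) ⊂
            (Finset.univ.filter (fun d => T a d ∧ T d b)) := by
          refine Finset.ssubset_iff_of_subset ?_ |>.2 ⟨c, ?_, ?_⟩
          · intro d hd
            simp only [Finset.mem_filter, Finset.mem_univ, true_and] at hd ⊢
            exact ⟨hac.trans hd.1, hd.2⟩
          · simp only [Finset.mem_filter, Finset.mem_univ, true_and]
            exact ⟨hac, hcb⟩
          · simp only [Finset.mem_filter, Finset.mem_univ, true_and, not_and]
            intro hcc
            exact absurd hcc (hacyc c)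
        have h1 : TransGen Et a c := by
          refine ih _ ?_ a c rfl hac
          rw [← hcard]
          exact Finset.card_lt_card hsub1
        have h2 : TransGen Et c b := by
          refine ih _ ?_ c b rfl hcb
          rw [← hcard]
          exact Finset.card_lt_card hsub2
        exact h1.trans h2
      · exact TransGen.single ⟨hab, h⟩
  ext a b
  constructor
  · intro h
    have : TransGen T a b := TransGen.mono (fun a b (hab : Et a b) => hab.1) a b h
    rwa [show TransGen T = T by haveI : IsTrans V T := ⟨hTtrans⟩; exact transGen_eq_self] at this
  · intro h
    exact key _ a b rfl h

omit [Fintype V] in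
private lemma aux_min (hacyc : ∀ a : V, ¬ TransGen E a a)
    (E' : V → V → Prop) (hE' : TransGen E' = TransGen E) :
    ∀ a b, (TransGen E a b ∧ ¬ ∃ c, TransGen E a c ∧ TransGen E c b) → E' a b := by
  intro a b ⟨hab, hno⟩
  have h : TransGen E' a b := hE' ▸ hab
  cases h with
  | single h => exact h
  | tail h1 h2 =>
    rename_i c
    exact absurd ⟨c, hE' ▸ h1, hE' ▸ TransGen.single h2⟩ hno

end Aux

/-- Uniqueness of the transitive reduction of a finite DAG: for every acyclic
relation `E` on a finite vertex set there is a unique relation `Et` with the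
same transitive closure as `E` such that no proper subrelation of `Et` has that
transitive closure; namely `Et` is the intersection of all relations whose
transitive closure equals that of `E`. -/
theorem stmt_10 {V : Type*} [Fintype V] (E : V → V → Prop)
    (hacyc : ∀ a : V, ¬ Relation.TransGen E a a) :
    (∃! Et : V → V → Prop,
      Relation.TransGen Et = Relation.TransGen E ∧
      ∀ Et' : V → V → Prop, (∀ a b, Et' a b → Et a b) → Et' ≠ Et →
        Relation.TransGen Et' ≠ Relation.TransGen E) ∧
    (let Et : V → V → Prop := fun a b =>
        ∀ E' : V → V → Prop, Relation.TransGen E' = Relation.TransGen E → E' a b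
     Relation.TransGen Et = Relation.TransGen E ∧
      ∀ Et' : V → V → Prop, (∀ a b, Et' a b → Et a b) → Et' ≠ Et →
        Relation.TransGen Et' ≠ Relation.TransGen E) := by
  classical
  set T := Relation.TransGen E with hT
  set Et : V → V → Prop := fun a b => T a b ∧ ¬ ∃ c, T a c ∧ T c b with hEt
  have hclos : Relation.TransGen Et = T := aux_closure E hacyc
  have hmin : ∀ E' : V → V → Prop, Relation.TransGen E' = T →
      ∀ a b, Et a b → E' a b := fun E' hE' => aux_min E hacyc E' hE'
  have hP : Relation.TransGen Et = T ∧
      ∀ Et' : V → V → Prop, (∀ a b, Et' a b → Et a b) → Et' ≠ Et →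
        Relation.TransGen Et' ≠ T := by
    refine ⟨hclos, ?_⟩
    intro Et' hsub hne hTG
    apply hne
    funext a b
    exact propext ⟨fun h => hsub a b h, fun h => hmin Et' hTG a b h⟩
  have huniq : ∀ F : V → V → Prop,
      (Relation.TransGen F = T ∧
        ∀ Et' : V → V → Prop, (∀ a b, Et' a b → F a b) → Et' ≠ F →
          Relation.TransGen Et' ≠ T) → F = Et := by
    intro F ⟨hF1, hF2⟩
    by_contra hne
    exact hF2 Et (hmin F hF1) (fun h => hne h.symm) hclos
  refine ⟨⟨Et, hP, huniq⟩, ?_⟩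
  intro Et0
  have hEt0 : Et0 = Et := by
    funext a b
    refine propext ⟨fun h => h Et hclos, fun h E' hE' => hmin E' hE' a b h⟩
  rw [hEt0]
  exact hP
end

section
/- Two finite regular constructible persistent sets S, S' : ℝ → Set are naturally isomorphic if and only if they have the same minimal critical set C = {t_1 < ... < t_n} and their restrictions S|_C and S'|_C to C are naturally isomorphic as functors C → Set. -/
universe u

/-- A persistent set: a functor `(ℝ, ≤) → Set`. -/
structure PersistentSet where
  obj : ℝ → Type u
  map : ∀ {t t' : ℝ}, t ≤ t' → obj t → obj t'
  map_id : ∀ (t : ℝ) (x : obj t), map (le_refl t) x = x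
  map_comp : ∀ {t t' t'' : ℝ} (h : t ≤ t') (h' : t' ≤ t'') (x : obj t),
    map h' (map h x) = map (h.trans h') x

/-- `C` is a critical set for `S`: `S(t) = ∅` below all critical values, and the
structure maps are bijective on intervals containing no critical value. -/
def IsCriticalSet (S : PersistentSet.{u}) (C : Finset ℝ) : Prop :=
  (∀ t : ℝ, (∀ c ∈ C, t < c) → IsEmpty (S.obj t)) ∧
  (∀ t t' : ℝ, ∀ h : t ≤ t', (∀ c ∈ C, c < t ∨ t' < c) →
    Function.Bijective (S.map h))

/-- `S` is constructible with minimal critical set `C`. -/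
def MinimalCriticalSet (S : PersistentSet.{u}) (C : Finset ℝ) : Prop :=
  IsCriticalSet S C ∧ ∀ C' : Finset ℝ, IsCriticalSet S C' → C ⊆ C'

/-- `S` is regular: at every critical value `c`, `S(c ≤ c + ε)` is bijective for
all sufficiently small `ε > 0`. -/
def RegularPS (S : PersistentSet.{u}) (C : Finset ℝ) : Prop :=
  ∀ c ∈ C, ∃ ε₀ > (0 : ℝ), ∀ ε : ℝ, ∀ hε : 0 < ε, ∀ hε' : ε < ε₀,
    Function.Bijective (S.map (show c ≤ c + ε by linarith))

/-- `S` is a finite persistent set. -/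
def FinitePS (S : PersistentSet.{u}) : Prop := ∀ t : ℝ, Finite (S.obj t)

/-- A natural isomorphism of persistent sets. -/
def PSIso (S S' : PersistentSet.{u}) : Prop :=
  ∃ η : ∀ t : ℝ, S.obj t → S'.obj t,
    (∀ t, Function.Bijective (η t)) ∧
    ∀ (t t' : ℝ) (h : t ≤ t') (x : S.obj t), η t' (S.map h x) = S'.map h (η t x)

/-- A natural isomorphism of the restrictions to a critical set `C`. -/
def PSIsoOn (S S' : PersistentSet.{u}) (C : Finset ℝ) : Prop :=
  ∃ η : ∀ t : ℝ, t ∈ C → S.obj t → S'.obj t,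
    (∀ t (ht : t ∈ C), Function.Bijective (η t ht)) ∧
    ∀ (t t' : ℝ) (ht : t ∈ C) (ht' : t' ∈ C) (h : t ≤ t') (x : S.obj t),
      η t' ht' (S.map h x) = S'.map h (η t ht x)

/-- Structure maps as functions compose. -/
lemma PS_map_comp_fun (S : PersistentSet.{u}) {t t' t'' : ℝ} (h : t ≤ t') (h' : t' ≤ t'') :
    (S.map (h.trans h') : S.obj t → S.obj t'') = S.map h' ∘ S.map h := by
  funext x; exact (S.map_comp h h' x).symm

/-- If `c` is the largest critical value `≤ t`, then `S(c ≤ t)` is bijective. -/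
lemma aux_bij (S : PersistentSet.{u}) (C : Finset ℝ) (hC : IsCriticalSet S C)
    (hreg : RegularPS S C) (c t : ℝ) (hc : c ∈ C) (h : c ≤ t)
    (hmax : ∀ c' ∈ C, c' ≤ t → c' ≤ c) : Function.Bijective (S.map h) := by
  rcases eq_or_lt_of_le h with rfl | hlt
  · have : (S.map h : S.obj c → S.obj c) = id := by
      funext x; exact S.map_id c x
    rw [this]; exact Function.bijective_id
  · obtain ⟨ε₀, hε₀, hε⟩ := hreg c hc
    set e : ℝ := min (ε₀ / 2) (t - c) with he
    have he0 : 0 < e := lt_min (by linarith) (by linarith)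
    have he1 : e < ε₀ := lt_of_le_of_lt (min_le_left _ _) (by linarith)
    have he2 : c + e ≤ t := by
      have := min_le_right (ε₀ / 2) (t - c); simp only [← he] at this; linarith
    have hb1 : Function.Bijective (S.map (show c ≤ c + e by linarith)) := hε e he0 he1
    have hb2 : Function.Bijective (S.map he2) := by
      apply hC.2 (c + e) t he2
      intro c' hc'
      by_cases hle : c' ≤ t
      · exact Or.inl (lt_of_le_of_lt (hmax c' hc' hle) (by linarith))
      · exact Or.inr (lt_of_not_ge hle)
    have : (S.map h : S.obj c → S.obj t) = S.map he2 ∘ S.map (show c ≤ c + e by linarith) :=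
      PS_map_comp_fun S _ _
    rw [this]; exact hb2.comp hb1

/-- If the restrictions to a common minimal critical set are isomorphic,
the persistent sets are isomorphic. -/
lemma aux_iso (S S' : PersistentSet.{u}) (C : Finset ℝ)
    (hC : MinimalCriticalSet S C) (hC' : MinimalCriticalSet S' C)
    (hreg : RegularPS S C) (hreg' : RegularPS S' C)
    (hiso : PSIsoOn S S' C) : PSIso S S' := by
  classical
  obtain ⟨η, ηbij, ηnat⟩ := hiso
  -- for `t` with some critical value `≤ t`, the largest such
  set P : ℝ → Prop := fun t => (C.filter (· ≤ t)).Nonempty with hP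
  have Pmono : ∀ {t t'}, t ≤ t' → P t → P t' := by
    rintro t t' htt' ⟨c, hc⟩
    simp only [Finset.mem_filter] at hc
    exact ⟨c, Finset.mem_filter.2 ⟨hc.1, le_trans hc.2 htt'⟩⟩
  set g : ∀ t : ℝ, P t → ℝ := fun t ht => (C.filter (· ≤ t)).max' ht with hg
  have gmem : ∀ t ht, g t ht ∈ C := fun t ht =>
    (Finset.mem_filter.1 ((C.filter (· ≤ t)).max'_mem ht)).1
  have gle : ∀ t ht, g t ht ≤ t := fun t ht =>
    (Finset.mem_filter.1 ((C.filter (· ≤ t)).max'_mem ht)).2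
  have gmax : ∀ t ht, ∀ c' ∈ C, c' ≤ t → c' ≤ g t ht := fun t ht c' hc' hle =>
    (C.filter (· ≤ t)).le_max' c' (Finset.mem_filter.2 ⟨hc', hle⟩)
  have bijS : ∀ t ht, Function.Bijective (S.map (gle t ht)) := fun t ht =>
    aux_bij S C hC.1 hreg _ t (gmem t ht) (gle t ht) (gmax t ht)
  have bijS' : ∀ t ht, Function.Bijective (S'.map (gle t ht)) := fun t ht =>
    aux_bij S' C hC'.1 hreg' _ t (gmem t ht) (gle t ht) (gmax t ht)
  have emptyS : ∀ t, ¬ P t → IsEmpty (S.obj t) := by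
    intro t ht
    apply hC.1.1 t
    intro c hc
    by_contra hlt
    exact ht ⟨c, Finset.mem_filter.2 ⟨hc, le_of_not_gt hlt⟩⟩
  have emptyS' : ∀ t, ¬ P t → IsEmpty (S'.obj t) := by
    intro t ht
    apply hC'.1.1 t
    intro c hc
    by_contra hlt
    exact ht ⟨c, Finset.mem_filter.2 ⟨hc, le_of_not_gt hlt⟩⟩
  set eS : ∀ t ht, S.obj (g t ht) ≃ S.obj t := fun t ht =>
    Equiv.ofBijective _ (bijS t ht) with heS
  refine ⟨fun t x =>
    if ht : P t then
      S'.map (gle t ht) (η (g t ht) (gmem t ht) ((eS t ht).symm x))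
    else (emptyS t ht).elim x, ?_, ?_⟩
  · intro t
    by_cases ht : P t
    · simp only [dif_pos ht]
      exact (bijS' t ht).comp ((ηbij _ _).comp (eS t ht).symm.bijective)
    · have h1 := emptyS t ht
      have h2 := emptyS' t ht
      exact ⟨fun x => h1.elim x, fun y => h2.elim y⟩
  · intro t t' h x
    by_cases ht : P t
    · have ht' : P t' := Pmono h ht
      simp only [dif_pos ht, dif_pos ht']
      have hcc' : g t ht ≤ g t' ht' := gmax t' ht' _ (gmem t ht) (le_trans (gle t ht) h)
      -- key: (eS t').symm (S.map h x) = S.map hcc' ((eS t).symm x)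
      have key : (eS t' ht').symm (S.map h x) = S.map hcc' ((eS t ht).symm x) := by
        apply (bijS t' ht').1
        show (eS t' ht') _ = _
        rw [Equiv.apply_symm_apply]
        show S.map h x = S.map (gle t' ht') (S.map hcc' ((eS t ht).symm x))
        rw [S.map_comp hcc' (gle t' ht')]
        have : x = S.map (gle t ht) ((eS t ht).symm x) := ((eS t ht).apply_symm_apply x).symm
        conv_lhs => rw [this]
        rw [S.map_comp (gle t ht) h]
      rw [key, ηnat _ _ (gmem t ht) (gmem t' ht') hcc', S'.map_comp hcc' (gle t' ht'),
        S'.map_comp (gle t ht) h]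
    · exact (emptyS t ht).elim x

/-- A natural isomorphism transfers critical sets. -/
lemma aux_transfer (S S' : PersistentSet.{u}) (D : Finset ℝ)
    (hD : IsCriticalSet S D) (hiso : PSIso S S') : IsCriticalSet S' D := by
  obtain ⟨η, ηbij, ηnat⟩ := hiso
  constructor
  · intro t ht
    have h1 := hD.1 t ht
    constructor
    intro y
    obtain ⟨x, -⟩ := (ηbij t).2 y
    exact h1.false x
  · intro t t' h hint
    have hb := hD.2 t t' h hint
    choose inv hinvspec using (ηbij t).2
    have hinvbij : Function.Bijective inv :=
      ⟨fun a b hab => by rw [← hinvspec a, ← hinvspec b, hab],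
       fun x => ⟨η t x, (ηbij t).1 (hinvspec (η t x))⟩⟩
    have : (S'.map h : S'.obj t → S'.obj t') = (η t' ∘ S.map h) ∘ inv := by
      funext y
      show S'.map h y = η t' (S.map h (inv y))
      rw [ηnat t t' h (inv y), hinvspec y]
    rw [this]
    exact ((ηbij t').comp hb).comp hinvbij

lemma aux_symm (S S' : PersistentSet.{u}) (hiso : PSIso S S') : PSIso S' S := by
  obtain ⟨η, ηbij, ηnat⟩ := hiso
  choose inv hinvspec using fun t => (ηbij t).2
  refine ⟨inv, ?_, ?_⟩
  · intro t
    exact ⟨fun a b hab => by rw [← hinvspec t a, ← hinvspec t b, hab],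
      fun x => ⟨η t x, (ηbij t).1 (hinvspec t (η t x))⟩⟩
  · intro t t' h x
    apply (ηbij t').1
    rw [hinvspec t' (S'.map h x), ηnat t t' h (inv t x), hinvspec t x]

/-- Two finite regular constructible persistent sets are naturally isomorphic
iff they have the same minimal critical set and their restrictions to it are
naturally isomorphic. -/
theorem stmt_12 (S S' : PersistentSet.{u}) (C C' : Finset ℝ)
    (hC : MinimalCriticalSet S C) (hC' : MinimalCriticalSet S' C')
    (hreg : RegularPS S C) (hreg' : RegularPS S' C')
    (hfin : FinitePS S) (hfin' : FinitePS S') :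
    PSIso S S' ↔ (C = C' ∧ PSIsoOn S S' C) := by
  constructor
  · intro hiso
    have hCC' : C = C' := by
      apply Finset.Subset.antisymm
      · exact hC.2 C' (aux_transfer S' S C' hC'.1 (aux_symm S S' hiso))
      · exact hC'.2 C (aux_transfer S S' C hC.1 hiso)
    refine ⟨hCC', ?_⟩
    obtain ⟨η, ηbij, ηnat⟩ := hiso
    exact ⟨fun t _ => η t, fun t _ => ηbij t, fun t t' _ _ h x => ηnat t t' h x⟩
  · rintro ⟨rfl, hiso⟩
    exact aux_iso S S' C hC hC' hreg hreg' hiso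
end

section
/- Let S be a finite regular constructible persistent set with minimal critical set C, such that S(t) has cardinality 1 for all sufficiently large t. Then in the transitive reduction G of the DAG of the display poset D_{S|C}, every vertex has at most one outgoing edge and the underlying graph is connected and acyclic with a unique maximal element; in particular G is a rooted tree. -/
universe u

variable (S : PersistentSet.{u}) (C : Finset ℝ)

/-- The display poset of the restriction of `S` to its critical set `C`. -/
def DisplayPoset := Σ c : {x : ℝ // x ∈ C}, S.obj c.val

/-- The order of the display poset: `(t, p) ≤ (t', p')` iff `t ≤ t'` and the
structure map sends `p` to `p'`. -/
def leD (a b : DisplayPoset S C) : Prop :=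
  ∃ h : a.1.val ≤ b.1.val, S.map h a.2 = b.2

/-- Strict order of the display poset. -/
def ltD (a b : DisplayPoset S C) : Prop := leD S C a b ∧ a ≠ b

/-- Edges of the transitive reduction of the DAG of the display poset: the
covering relation. -/
def coverD (a b : DisplayPoset S C) : Prop :=
  ltD S C a b ∧ ¬ ∃ z : DisplayPoset S C, ltD S C a z ∧ ltD S C z b

lemma leD_trans {a b c : DisplayPoset S C} (h1 : leD S C a b) (h2 : leD S C b c) :
    leD S C a c := by
  obtain ⟨h1, e1⟩ := h1
  obtain ⟨h2, e2⟩ := h2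
  exact ⟨h1.trans h2, by rw [← S.map_comp h1 h2, e1, e2]⟩

lemma leD_antisymm {a b : DisplayPoset S C} (h1 : leD S C a b) (h2 : leD S C b a) :
    a = b := by
  obtain ⟨⟨ta, hta⟩, pa⟩ := a
  obtain ⟨⟨tb, htb⟩, pb⟩ := b
  obtain ⟨h1, e1⟩ := h1
  obtain ⟨h2, e2⟩ := h2
  have hts : ta = tb := le_antisymm h1 h2
  subst hts
  have e1' : S.map h1 pa = pb := e1
  have : pa = pb := by rw [← e1']; exact (S.map_id ta pa).symm
  subst this
  rfl

lemma ltD_trans {a b c : DisplayPoset S C} (h1 : ltD S C a b) (h2 : ltD S C b c) :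
    ltD S C a c := by
  refine ⟨leD_trans S C h1.1 h2.1, ?_⟩
  rintro rfl
  exact h1.2 (leD_antisymm S C h1.1 h2.1)

/-- For a finite regular constructible persistent set `S` that is eventually a
single point, the transitive reduction of the DAG of the display poset of
`S|C` is a rooted tree: every vertex has at most one outgoing edge, there is a
unique maximal element below which everything lies (connectedness), and the
edge relation is acyclic. -/
theorem stmt_13 (hC : MinimalCriticalSet S C) (hreg : RegularPS S C)
    (hfin : FinitePS S)
    (hbig : ∃ T : ℝ, ∀ t : ℝ, T ≤ t → Nonempty (S.obj t) ∧ Subsingleton (S.obj t)) :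
    (∀ a b b' : DisplayPoset S C, coverD S C a b → coverD S C a b' → b = b') ∧
    (∃! m : DisplayPoset S C, ∀ a : DisplayPoset S C, leD S C a m) ∧
    (∀ a : DisplayPoset S C, ¬ Relation.TransGen (coverD S C) a a) := by

  obtain ⟨T, hT⟩ := hbig
  -- C is nonempty
  have hCne : C.Nonempty := by
    by_contra h
    rw [Finset.not_nonempty_iff_eq_empty] at h
    subst h
    exact (hC.1.1 T (by simp)).false (hT T le_rfl).1.some
  set cmax := C.max' hCne with hcmax
  -- S.obj cmax is a nonempty subsingleton
  obtain ⟨ε₀, hε₀, hbij⟩ := hreg cmax (C.max'_mem hCne)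
  set ε := ε₀ / 2 with hε
  have hεpos : 0 < ε := by positivity
  have hεlt : ε < ε₀ := by simp [hε]; linarith
  have bij1 : Function.Bijective (S.map (show cmax ≤ cmax + ε by linarith)) :=
    hbij ε hεpos hεlt
  set t₀ := max T (cmax + ε) with ht₀
  have h1 : cmax + ε ≤ t₀ := le_max_right _ _
  have bij2 : Function.Bijective (S.map h1) := by
    refine hC.1.2 _ _ h1 (fun c hc => Or.inl ?_)
    have := C.le_max' c hc
    linarith
  have bij3 : Function.Bijective
      (S.map (show cmax ≤ t₀ by linarith [le_max_right T (cmax + ε)])) := by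
    have := Function.Bijective.comp bij2 bij1
    have heq : S.map h1 ∘ S.map (show cmax ≤ cmax + ε by linarith)
        = S.map (show cmax ≤ t₀ by linarith [le_max_right T (cmax + ε)]) := by
      funext x
      exact S.map_comp _ _ x
    rwa [heq] at this
  have hTt₀ : T ≤ t₀ := le_max_left _ _
  have hne : Nonempty (S.obj cmax) := by
    obtain ⟨y⟩ := (hT t₀ hTt₀).1
    obtain ⟨x, _⟩ := bij3.2 y
    exact ⟨x⟩
  have hsub : Subsingleton (S.obj cmax) := by
    have := (hT t₀ hTt₀).2
    constructor
    intro x y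
    exact bij3.1 (Subsingleton.elim _ _)
  -- part 1: unique covers
  refine ⟨?_, ?_, ?_⟩
  · intro a b b' hb hb'
    rcases le_total b.1.val b'.1.val with h | h
    · obtain ⟨⟨⟨hab, eab⟩, hneab⟩, _⟩ := hb
      obtain ⟨⟨⟨hab', eab'⟩, hneab'⟩, hnoz⟩ := hb'
      have hle : leD S C b b' := by
        refine ⟨h, ?_⟩
        rw [← eab, S.map_comp, ← eab']
      by_contra hne'
      exact hnoz ⟨b, ⟨⟨hab, eab⟩, hneab⟩, hle, hne'⟩
    · obtain ⟨⟨⟨hab, eab⟩, hneab⟩, hnoz⟩ := hb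
      obtain ⟨⟨⟨hab', eab'⟩, hneab'⟩, _⟩ := hb'
      have hle : leD S C b' b := by
        refine ⟨h, ?_⟩
        rw [← eab', S.map_comp, ← eab]
      by_contra hne'
      exact hnoz ⟨b', ⟨⟨hab', eab'⟩, hneab'⟩, hle, fun e => hne' e.symm⟩
  -- part 2: unique maximal element
  · obtain ⟨p₀⟩ := hne
    have hall : ∀ a : DisplayPoset S C,
        leD S C a (⟨⟨cmax, C.max'_mem hCne⟩, p₀⟩ : DisplayPoset S C) := by
      intro a
      exact ⟨C.le_max' a.1.val a.1.2, Subsingleton.elim _ _⟩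
    refine ⟨⟨⟨cmax, C.max'_mem hCne⟩, p₀⟩, hall, ?_⟩
    intro m' hm'
    exact leD_antisymm S C (hall m') (hm' _)
  -- part 3: acyclicity
  · intro a hcyc
    have htr : Relation.TransGen (ltD S C) a a :=
      Relation.TransGen.mono (r := coverD S C) (p := ltD S C) (fun x y h => h.1) a a hcyc
    have ht : Transitive (ltD S C) := fun _ _ _ h1 h2 => ltD_trans S C h1 h2
    haveI : IsTrans _ (ltD S C) := ⟨fun _ _ _ h1 h2 => ht h1 h2⟩
    rw [Relation.transGen_eq_self] at htr
    exact htr.2 rfl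
end
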